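/- arXiv:1406.0742 — 2 statements merged into one kernel-verified Lean document; each statement's English description precedes it below -/
import Mathlib

section
/- Let T > 0 and α ∈ (0,1). There exist constants C = C(α,m,n,T) > 0 and m₀ = m₀(α,m,n) > 0 such that for every function u ∈ C^{0,2+α}_{WF}([0,T]×S̄_{n,m}), every ε ∈ (0,1), and every i ∈ {1,…,n}: ‖u_{x_i}‖_{C([0,T]×S̄_{n,m})} ≤ ε ‖u‖_{C^{0,2+α}_{WF}([0,T]×S̄_{n,m})} + C ε^{−m₀} ‖u‖_{C([0,T]×S̄_{n,m})}. -/
open scoped ENNReal BigOperators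
open Set

noncomputable section

namespace Kimura

/-- Spatial variable space `ℝ^n × ℝ^m`. -/
abbrev Z (n m : ℕ) : Type := (Fin n → ℝ) × (Fin m → ℝ)

/-- Time–space variable space. -/
abbrev E (n m : ℕ) : Type := ℝ × Z n m

variable {n m : ℕ}

/-- The open orthant `S_{n,m} = (0,∞)^n × ℝ^m`. -/
def Sopen (n m : ℕ) : Set (Z n m) := {z | ∀ i, 0 < z.1 i}

/-- The closed orthant `S̄_{n,m} = [0,∞)^n × ℝ^m`. -/
def Sbar (n m : ℕ) : Set (Z n m) := {z | ∀ i, 0 ≤ z.1 i}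

/-- The function `F` used to define the WF distance. -/
def Fwf (s : ℝ) : ℝ := if s ≤ 1 then 2 * Real.sqrt s else s + 1

/-- The spatial WF distance `ρ₀`. -/
def rho0 (z0 z : Z n m) : ℝ :=
  (⨆ i : Fin n, |Fwf (z0.1 i) - Fwf (z.1 i)|) + ⨆ l : Fin m, |z0.2 l - z.2 l|

/-- The parabolic WF distance `ρ`. -/
def rho (P0 P : E n m) : ℝ := rho0 P0.2 P.2 + Real.sqrt |P0.1 - P.1|

/-- The parabolic cylinder `J × D`. -/
def QT (J : Set ℝ) (D : Set (Z n m)) : Set (E n m) := J ×ˢ D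

/-- Supremum norm on `J × D` (valued in `ℝ≥0∞`). -/
def supN (J : Set ℝ) (D : Set (Z n m)) (u : E n m → ℝ) : ℝ≥0∞ :=
  ⨆ P ∈ QT J D, ENNReal.ofReal |u P|

/-- The WF Hölder seminorm of exponent `a` on `J × D`. -/
def holderSemi (a : ℝ) (J : Set ℝ) (D : Set (Z n m)) (u : E n m → ℝ) : ℝ≥0∞ :=
  ⨆ P1 ∈ QT J D, ⨆ P2 ∈ QT J D, ⨆ _ : P1 ≠ P2,
    ENNReal.ofReal (|u P1 - u P2| / rho P1 P2 ^ a)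

/-- The `C^{0,α}_{WF}` norm on `J × D`. -/
def holderN (a : ℝ) (J : Set ℝ) (D : Set (Z n m)) (u : E n m → ℝ) : ℝ≥0∞ :=
  supN J D u + holderSemi a J D u

/-- Time direction. -/
def eT (n m : ℕ) : E n m := (1, 0)

/-- `x_i` direction. -/
def eX (n m : ℕ) (i : Fin n) : E n m := (0, (Pi.single i 1, 0))

/-- `y_l` direction. -/
def eY (n m : ℕ) (l : Fin m) : E n m := (0, (0, Pi.single l 1))

/-- Partial (line) derivative along the direction `v`. -/
def dl (v : E n m) (u : E n m → ℝ) : E n m → ℝ := fun P => lineDeriv ℝ u P v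

/-- Iterated partial derivative `D_t^τ D_x^{ζx} D_y^{ζy}`. -/
def multiD (τ : ℕ) (ζx : Fin n → ℕ) (ζy : Fin m → ℕ) (u : E n m → ℝ) : E n m → ℝ :=
  (dl (eT n m))^[τ]
    (((List.ofFn fun i : Fin n => (dl (eX n m i))^[ζx i]).foldr (· ∘ ·) id)
      (((List.ofFn fun l : Fin m => (dl (eY n m l))^[ζy l]).foldr (· ∘ ·) id) u))

/-- A parabolic multi-index `(τ, ζ)`. -/
abbrev MIdx (n m : ℕ) : Type := ℕ × (Fin n → ℕ) × (Fin m → ℕ)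

/-- Parabolic weight `2τ + |ζ|` of a multi-index. -/
def MIdx.wt (p : MIdx n m) : ℕ := 2 * p.1 + ((∑ i, p.2.1 i) + ∑ l, p.2.2 l)

/-- Iterated derivative associated with a multi-index. -/
def multiDP (p : MIdx n m) (u : E n m → ℝ) : E n m → ℝ := multiD p.1 p.2.1 p.2.2 u

/-- Multi-indices of parabolic weight at most `k`. -/
def Idx (n m k : ℕ) : Type := {p : MIdx n m // MIdx.wt p ≤ k}

/-- The `C^{k,α}_{WF}` norm on `J × D`. -/
def CkN (k : ℕ) (a : ℝ) (J : Set ℝ) (D : Set (Z n m)) (u : E n m → ℝ) : ℝ≥0∞ :=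
  ∑' p : Idx n m k, holderN a J D (multiDP p.1 u)

/-- The region `M_I`. -/
def MI (n m : ℕ) (I : Finset (Fin n)) : Set (Z n m) :=
  {z | (∀ i ∈ I, z.1 i ∈ Set.Ioo (0:ℝ) 1) ∧ ∀ j ∉ I, 1 < z.1 j}

/-- The region `M'_I`. -/
def MI' (n m : ℕ) (I : Finset (Fin n)) : Set (Z n m) :=
  {z | (∀ i ∈ I, z.1 i ∈ Set.Ioo (0:ℝ) 1) ∧ ∀ j ∉ I, 1 / 2 < z.1 j}

/-- The region `M''_I`. -/
def MI'' (n m : ℕ) (I : Finset (Fin n)) : Set (Z n m) :=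
  {z | (∀ i ∈ I, z.1 i ∈ Set.Ioo (0:ℝ) 2) ∧ ∀ j ∉ I, 1 / 4 < z.1 j}

/-- The `C^{0,2+α}_{WF}` norm on a piece `D ⊆ M̄_I`. -/
def pieceN (I : Finset (Fin n)) (a : ℝ) (J : Set ℝ) (D : Set (Z n m)) (u : E n m → ℝ) :
    ℝ≥0∞ :=
  CkN 1 a J D u + holderN a J D (dl (eT n m) u)
  + (∑ i ∈ I, ∑ j ∈ I, holderN a J D
      fun P => Real.sqrt (P.2.1 i * P.2.1 j) * dl (eX n m i) (dl (eX n m j) u) P)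
  + (∑ i ∈ I, ∑ j ∈ Iᶜ, holderN a J D
      fun P => Real.sqrt (P.2.1 i) * dl (eX n m i) (dl (eX n m j) u) P)
  + (∑ i ∈ I, ∑ l : Fin m, holderN a J D
      fun P => Real.sqrt (P.2.1 i) * dl (eX n m i) (dl (eY n m l) u) P)
  + (∑ i ∈ Iᶜ, ∑ j ∈ Iᶜ, holderN a J D (dl (eX n m i) (dl (eX n m j) u)))
  + (∑ i ∈ Iᶜ, ∑ l : Fin m, holderN a J D (dl (eX n m i) (dl (eY n m l) u)))
  + ∑ l : Fin m, ∑ q : Fin m, holderN a J D (dl (eY n m l) (dl (eY n m q) u))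

/-- The `C^{0,2+α}_{WF}` norm on `J × D` for an arbitrary domain `D`. -/
def C2N (a : ℝ) (J : Set ℝ) (D : Set (Z n m)) (u : E n m → ℝ) : ℝ≥0∞ :=
  ∑ I : Finset (Fin n), pieceN I a J (D ∩ closure (MI n m I)) u

/-- The `C^{k,2+α}_{WF}` norm on `J × D`. -/
def Ck2N (k : ℕ) (a : ℝ) (J : Set ℝ) (D : Set (Z n m)) (u : E n m → ℝ) : ℝ≥0∞ :=
  ∑' p : Idx n m k, C2N a J D (multiDP p.1 u)

/-- Time-independent extension of a spatial function. -/
def timeExt (f : Z n m → ℝ) : E n m → ℝ := fun P => f P.2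

/-- The elliptic `C^{k,α}_{WF}` norm on `D`. -/
def eCkN (k : ℕ) (a : ℝ) (D : Set (Z n m)) (f : Z n m → ℝ) : ℝ≥0∞ :=
  CkN k a (Set.Icc 0 0) D (timeExt f)

/-- The elliptic `C^{k,2+α}_{WF}` norm on `D`. -/
def eCk2N (k : ℕ) (a : ℝ) (D : Set (Z n m)) (f : Z n m → ℝ) : ℝ≥0∞ :=
  Ck2N k a (Set.Icc 0 0) D (timeExt f)

/-- Supremum norm of a spatial function on `D`. -/
def supNZ (D : Set (Z n m)) (f : Z n m → ℝ) : ℝ≥0∞ := ⨆ z ∈ D, ENNReal.ofReal |f z|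

/-- Membership in the space `C^{k,α}_{WF}(J × D)`. -/
def MemCk (k : ℕ) (a : ℝ) (J : Set ℝ) (D : Set (Z n m)) (u : E n m → ℝ) : Prop :=
  CkN k a J D u ≠ ⊤ ∧ ∀ p : Idx n m k, ContinuousOn (multiDP p.1 u) (QT J D)

/-- Membership in the space `C^{k,2+α}_{WF}(J × D)`. -/
def MemCk2 (k : ℕ) (a : ℝ) (J : Set ℝ) (D : Set (Z n m)) (u : E n m → ℝ) : Prop :=
  Ck2N k a J D u ≠ ⊤
  ∧ (∀ p : Idx n m (k + 1), ContinuousOn (multiDP p.1 u) (QT J D))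
  ∧ (∀ p : Idx n m k, ContinuousOn (dl (eT n m) (multiDP p.1 u)) (QT J D))
  ∧ (∀ p : Idx n m (k + 2), ContinuousOn (multiDP p.1 u) (QT J (D ∩ Sopen n m)))

/-- Membership in the elliptic space `C^{k,α}_{WF}(D)`. -/
def MemECk (k : ℕ) (a : ℝ) (D : Set (Z n m)) (f : Z n m → ℝ) : Prop :=
  MemCk k a (Set.Icc 0 0) D (timeExt f)

/-- Membership in the elliptic space `C^{k,2+α}_{WF}(D)`. -/
def MemECk2 (k : ℕ) (a : ℝ) (D : Set (Z n m)) (f : Z n m → ℝ) : Prop :=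
  MemCk2 k a (Set.Icc 0 0) D (timeExt f)

/-- Coefficients of a generalized Kimura operator. -/
structure Coeffs (n m : ℕ) where
  a : Fin n → Z n m → ℝ
  tA : Fin n → Fin n → Z n m → ℝ
  b : Fin n → Z n m → ℝ
  c : Fin n → Fin m → Z n m → ℝ
  d : Fin m → Fin m → Z n m → ℝ
  e : Fin m → Z n m → ℝ

/-- The generalized Kimura operator `L`. -/
def Lop (co : Coeffs n m) (u : E n m → ℝ) : E n m → ℝ := fun P =>
  (∑ i, (P.2.1 i * co.a i P.2 * dl (eX n m i) (dl (eX n m i) u) P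
        + co.b i P.2 * dl (eX n m i) u P))
  + (∑ i, ∑ j, P.2.1 i * P.2.1 j * co.tA i j P.2 * dl (eX n m i) (dl (eX n m j) u) P)
  + (∑ i, ∑ l, P.2.1 i * co.c i l P.2 * dl (eX n m i) (dl (eY n m l) u) P)
  + (∑ q, ∑ l, co.d q l P.2 * dl (eY n m q) (dl (eY n m l) u) P)
  + ∑ l, co.e l P.2 * dl (eY n m l) u P

/-- Strict ellipticity (condition (1) of the Assumption). -/
def Ellipt (δ : ℝ) (co : Coeffs n m) : Prop :=
  ∀ I : Finset (Fin n), ∀ z ∈ closure (MI n m I), ∀ ξ : Fin n → ℝ, ∀ η : Fin m → ℝ,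
    δ * ((∑ i, ξ i ^ 2) + ∑ l, η l ^ 2) ≤
      (∑ i ∈ I, co.a i z * ξ i ^ 2) + (∑ i ∈ Iᶜ, z.1 i * co.a i z * ξ i ^ 2)
      + (∑ i ∈ I, ∑ j ∈ I, co.tA i j z * ξ i * ξ j)
      + (∑ i ∈ I, ∑ j ∈ Iᶜ, z.1 j * (co.tA i j z + co.tA j i z) * ξ i * ξ j)
      + (∑ i ∈ Iᶜ, ∑ j ∈ Iᶜ, z.1 i * z.1 j * co.tA i j z * ξ i * ξ j)
      + (∑ i ∈ I, ∑ l, co.c i l z * ξ i * η l)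
      + (∑ i ∈ Iᶜ, ∑ l, z.1 i * co.c i l z * ξ i * η l)
      + ∑ q, ∑ l, co.d q l z * η q * η l

/-- Hölder continuity of the coefficients (condition (2) of the Assumption). -/
def HolderBd (k : ℕ) (a K : ℝ) (co : Coeffs n m) : Prop :=
  ∀ I : Finset (Fin n),
    (∑ i ∈ I, eCkN k a (closure (MI n m I)) (co.a i))
    + (∑ i ∈ Iᶜ, eCkN k a (closure (MI n m I)) fun z => z.1 i * co.a i z)
    + (∑ i ∈ I, ∑ j ∈ I, eCkN k a (closure (MI n m I)) (co.tA i j))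
    + (∑ i ∈ I, ∑ j ∈ Iᶜ,
        (eCkN k a (closure (MI n m I)) (fun z => z.1 j * co.tA i j z)
         + eCkN k a (closure (MI n m I)) fun z => z.1 j * co.tA j i z))
    + (∑ i ∈ Iᶜ, ∑ j ∈ Iᶜ, eCkN k a (closure (MI n m I)) fun z => z.1 i * z.1 j * co.tA i j z)
    + (∑ i ∈ I, ∑ l, eCkN k a (closure (MI n m I)) (co.c i l))
    + (∑ i ∈ Iᶜ, ∑ l, eCkN k a (closure (MI n m I)) fun z => z.1 i * co.c i l z)
    + (∑ q, ∑ l, eCkN k a (closure (MI n m I)) (co.d q l))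
    + (∑ i, eCkN k a (closure (MI n m I)) (co.b i))
    + (∑ l, eCkN k a (closure (MI n m I)) (co.e l))
    ≤ ENNReal.ofReal K

/-- Nonnegativity of the drift (condition (3) of the Assumption). -/
def NonnegDrift (co : Coeffs n m) : Prop :=
  ∀ i, ∀ z ∈ Sbar n m, z.1 i = 0 → 0 ≤ co.b i z

/-- The full coefficient Assumption of order `k`, exponent `a`, constants `δ`, `K`. -/
def Assump (k : ℕ) (a δ K : ℝ) (co : Coeffs n m) : Prop :=
  Ellipt δ co ∧ HolderBd k a K co ∧ NonnegDrift co

/-- The Euclidean ball of radius `r` about `z0`, relative to `S_{n,m}`. -/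
def ball (z0 : Z n m) (r : ℝ) : Set (Z n m) :=
  {z ∈ Sopen n m |
    Real.sqrt ((∑ i, (z.1 i - z0.1 i) ^ 2) + ∑ l, (z.2 l - z0.2 l) ^ 2) < r}

/-- A function all of whose iterated derivatives are continuous and bounded on `J × D`. -/
def SmoothBdd (J : Set ℝ) (D : Set (Z n m)) (g : E n m → ℝ) : Prop :=
  ∀ p : MIdx n m,
    ContinuousOn (multiDP p g) (QT J D) ∧ ∃ M : ℝ, ∀ P ∈ QT J D, |multiDP p g P| ≤ M

/-- Bounded continuous function on a set. -/
def BCOn {X : Type*} [TopologicalSpace X] (g : X → ℝ) (D : Set X) : Prop :=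
  ContinuousOn g D ∧ ∃ M : ℝ, ∀ x ∈ D, |g x| ≤ M



lemma foldr_comp_eq_id {β : Type*} (l : List (β → β)) (h : ∀ f ∈ l, f = id) :
    l.foldr (· ∘ ·) id = id := by
  induction l with
  | nil => rfl
  | cons f t ih =>
      simp only [List.foldr_cons]
      rw [h f (by simp), ih (fun g hg => h g (List.mem_cons_of_mem _ hg))]
      rfl

lemma foldr_comp_eq_single {β : Type*} : ∀ {n : ℕ} (g : Fin n → (β → β)) (i : Fin n),
    (∀ k, k ≠ i → g k = id) → (List.ofFn g).foldr (· ∘ ·) id = g i := by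
  intro n
  induction n with
  | zero => exact fun g i _ => i.elim0
  | succ n ih =>
      intro g i h
      rw [List.ofFn_succ, List.foldr_cons]
      rcases Fin.eq_zero_or_eq_succ i with rfl | ⟨j, rfl⟩
      · rw [foldr_comp_eq_id]
        · rfl
        · intro f hf
          obtain ⟨k, rfl⟩ := List.mem_ofFn.mp hf
          exact h _ (Fin.succ_ne_zero k)
      · rw [h 0 (Fin.succ_ne_zero j).symm,
          ih (fun k => g k.succ) j (fun k hk => h _ (by simpa [Fin.succ_inj] using hk))]
        rfl

lemma sqrt_add_le' (x y : ℝ) (hx : 0 ≤ x) (hy : 0 ≤ y) :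
    Real.sqrt (x + y) ≤ Real.sqrt x + Real.sqrt y := by
  rw [Real.sqrt_le_iff]
  constructor
  · positivity
  · nlinarith [Real.sq_sqrt hx, Real.sq_sqrt hy, Real.sqrt_nonneg x, Real.sqrt_nonneg y,
      mul_nonneg (Real.sqrt_nonneg x) (Real.sqrt_nonneg y)]

lemma abs_sqrt_sub_sqrt_le (x y : ℝ) (hx : 0 ≤ x) (hy : 0 ≤ y) :
    |Real.sqrt x - Real.sqrt y| ≤ Real.sqrt |x - y| := by
  wlog h : y ≤ x with H
  · rw [abs_sub_comm, abs_sub_comm x y]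
    exact H y x hy hx (le_of_not_ge h)
  · rw [abs_of_nonneg (sub_nonneg.mpr (Real.sqrt_le_sqrt h)), abs_of_nonneg (sub_nonneg.mpr h)]
    have h2 := sqrt_add_le' (x - y) y (by linarith) hy
    rw [sub_add_cancel] at h2
    linarith

lemma scalar_interp (φ w : ℝ → ℝ) {c d M B : ℝ} (hc : c ≤ 0) (hd : 0 ≤ d)
    (hcd : c < d) (hB : 0 ≤ B)
    (h1 : ∀ s ∈ Set.Icc c d, w s = deriv φ s)
    (h2 : ∀ s ∈ Set.Icc c d, |φ s| ≤ M)
    (h3 : ∀ s ∈ Set.Icc c d, s ≠ 0 → |w 0 - w s| ≤ B) :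
    |w 0| ≤ B + 2 * M / (d - c) := by
  have h0 : (0:ℝ) ∈ Set.Icc c d := ⟨hc, hd⟩
  have hM : 0 ≤ M := le_trans (abs_nonneg _) (h2 0 h0)
  have hdc : 0 < d - c := by linarith
  have hfrac : 0 ≤ 2 * M / (d - c) := by positivity
  by_cases hz : ∃ s ∈ Set.Icc c d, w s = 0
  · obtain ⟨s, hs, hws⟩ := hz
    by_cases hs0 : s = 0
    · rw [hs0] at hws
      rw [hws]
      simpa using add_nonneg hB hfrac
    · have h4 := h3 s hs hs0
      rw [hws, sub_zero] at h4
      linarith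
  · push_neg at hz
    have hdiff : ∀ s ∈ Set.Icc c d, DifferentiableAt ℝ φ s := by
      intro s hs
      refine differentiableAt_of_deriv_ne_zero ?_
      rw [← h1 s hs]; exact hz s hs
    obtain ⟨ξ, hξ, hderiv⟩ := exists_deriv_eq_slope φ hcd
      (fun s hs => (hdiff s hs).continuousAt.continuousWithinAt)
      (fun s hs => (hdiff s (Set.Ioo_subset_Icc_self hs)).differentiableWithinAt)
    have hξI : ξ ∈ Set.Icc c d := Set.Ioo_subset_Icc_self hξ
    have habs : |φ d - φ c| ≤ 2 * M := by
      have ha1 := h2 d (Set.right_mem_Icc.mpr hcd.le)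
      have ha2 := h2 c (Set.left_mem_Icc.mpr hcd.le)
      calc |φ d - φ c| ≤ |φ d| + |φ c| := abs_sub _ _
        _ ≤ 2 * M := by linarith
    have hwξ : |w ξ| ≤ 2 * M / (d - c) := by
      rw [h1 ξ hξI, hderiv, abs_div, abs_of_pos hdc]
      exact (div_le_div_iff_of_pos_right hdc).mpr habs
    by_cases hξ0 : ξ = 0
    · rw [← hξ0]; linarith
    · have h5 := h3 ξ hξI hξ0
      calc |w 0| = |(w 0 - w ξ) + w ξ| := by ring_nf
        _ ≤ |w 0 - w ξ| + |w ξ| := abs_add_le _ _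
        _ ≤ B + 2 * M / (d - c) := add_le_add h5 hwξ

section AuxStatement5

lemma multiD_zero_eq (u : E n m → ℝ) : multiD (n := n) (m := m) 0 0 0 u = u := by
  unfold multiD
  have h1 : (List.ofFn fun l : Fin m => (dl (eY n m l))^[(0 : Fin m → ℕ) l]).foldr (· ∘ ·) id
      = id := by
    refine foldr_comp_eq_id _ ?_
    intro f hf
    obtain ⟨k, rfl⟩ := List.mem_ofFn.mp hf
    simp
  have h2 : (List.ofFn fun k : Fin n => (dl (eX n m k))^[(0 : Fin n → ℕ) k]).foldr (· ∘ ·) id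
      = id := by
    refine foldr_comp_eq_id _ ?_
    intro f hf
    obtain ⟨k, rfl⟩ := List.mem_ofFn.mp hf
    simp
  rw [h1, h2]
  simp

lemma multiD_single_eq (i : Fin n) (u : E n m → ℝ) :
    multiD 0 (Pi.single i 1) 0 u = dl (eX n m i) u := by
  unfold multiD
  have h1 : (List.ofFn fun l : Fin m => (dl (eY n m l))^[(0 : Fin m → ℕ) l]).foldr (· ∘ ·) id
      = id := by
    refine foldr_comp_eq_id _ ?_
    intro f hf
    obtain ⟨k, rfl⟩ := List.mem_ofFn.mp hf
    simp
  have h2 : (List.ofFn fun k : Fin n => (dl (eX n m k))^[(Pi.single i 1 : Fin n → ℕ) k]).foldr (· ∘ ·) id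
      = dl (eX n m i) := by
    have := foldr_comp_eq_single (fun k : Fin n => (dl (eX n m k))^[(Pi.single i 1 : Fin n → ℕ) k]) i
      (fun k hk => by simp [Pi.single_eq_of_ne hk])
    rw [this]
    simp
  rw [h1, h2]
  simp

lemma mem_closure_MI (I : Finset (Fin n)) (z : Z n m)
    (h1 : ∀ k ∈ I, z.1 k ∈ Set.Icc (0:ℝ) 1) (h2 : ∀ k ∉ I, 1 ≤ z.1 k) :
    z ∈ closure (MI n m I) := by
  classical
  set d : ℕ → ℝ := fun k => 1 / (k + 1) with hd
  have hd0 : ∀ k, 0 < d k := fun k => by positivity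
  have hd1 : ∀ k, d k ≤ 1 := by
    intro k
    rw [hd]
    rw [div_le_one (by positivity)]
    simp
  have hdt : Filter.Tendsto d Filter.atTop (nhds 0) := tendsto_one_div_add_atTop_nhds_zero_nat
  set w : ℕ → Z n m := fun k =>
    (fun j => if j ∈ I then (1 - d k) * z.1 j + d k / 2 else z.1 j + d k, z.2) with hwdef
  have hw : ∀ k, w k ∈ MI n m I := by
    intro k
    constructor
    · intro j hj
      simp only [hwdef, if_pos hj]
      obtain ⟨hj0, hj1⟩ := h1 j hj
      constructor
      · have : 0 ≤ (1 - d k) * z.1 j := mul_nonneg (by linarith [hd1 k]) hj0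
        linarith [hd0 k]
      · nlinarith [hd0 k, hd1 k]
    · intro j hj
      simp only [hwdef, if_neg hj]
      linarith [hd0 k, h2 j hj]
  have ht : Filter.Tendsto w Filter.atTop (nhds z) := by
    have hz : z = (z.1, z.2) := rfl
    rw [hz]
    refine Filter.Tendsto.prodMk_nhds ?_ tendsto_const_nhds
    rw [tendsto_pi_nhds]
    intro j
    by_cases hj : j ∈ I
    · simp only [hwdef, if_pos hj]
      have : Filter.Tendsto (fun k => (1 - d k) * z.1 j + d k / 2) Filter.atTop
          (nhds ((1 - 0) * z.1 j + 0 / 2)) :=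
        ((tendsto_const_nhds.sub hdt).mul tendsto_const_nhds).add (hdt.div_const 2)
      simpa using this
    · simp only [hwdef, if_neg hj]
      simpa using tendsto_const_nhds.add hdt
  exact mem_closure_of_tendsto ht (Filter.Eventually.of_forall hw)

lemma fwf_lt {p q : ℝ} (hp : 0 ≤ p) (hpq : p < q) : Fwf p < Fwf q := by
  unfold Fwf
  split_ifs with hp1 hq1 hq1
  · have := Real.sqrt_lt_sqrt hp hpq
    linarith
  · have hsq : Real.sqrt p ≤ 1 := by
      rw [show (1:ℝ) = Real.sqrt 1 from Real.sqrt_one.symm]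
      exact Real.sqrt_le_sqrt hp1
    linarith [not_le.mp hq1]
  · linarith [not_le.mp hp1]
  · linarith

lemma fwf_eq_linear {p : ℝ} (hp : 1 ≤ p) : Fwf p = p + 1 := by
  unfold Fwf
  split_ifs with h
  · have : p = 1 := le_antisymm h hp
    rw [this]
    rw [Real.sqrt_one]
    norm_num
  · rfl

lemma fwf_diff_le_sqrt {p q h : ℝ} (hh0 : 0 ≤ h) (hh1 : h ≤ 1) (hpq : |p - q| ≤ h)
    (hcase : (p ∈ Set.Icc (0:ℝ) 1 ∧ q ∈ Set.Icc (0:ℝ) 1) ∨ (1 ≤ p ∧ 1 ≤ q)) :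
    |Fwf p - Fwf q| ≤ 2 * Real.sqrt h := by
  rcases hcase with ⟨⟨hp0, hp1⟩, hq0, hq1⟩ | ⟨hp, hq⟩
  · have e1 : Fwf p = 2 * Real.sqrt p := if_pos hp1
    have e2 : Fwf q = 2 * Real.sqrt q := if_pos hq1
    rw [e1, e2, show 2 * Real.sqrt p - 2 * Real.sqrt q = 2 * (Real.sqrt p - Real.sqrt q) by ring,
      abs_mul, abs_of_nonneg (by norm_num : (0:ℝ) ≤ 2)]
    have := abs_sqrt_sub_sqrt_le p q hp0 hq0
    have h2 := Real.sqrt_le_sqrt hpq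
    linarith
  · rw [fwf_eq_linear hp, fwf_eq_linear hq]
    have hs1 : Real.sqrt h ≤ 1 := by
      rw [show (1:ℝ) = Real.sqrt 1 from Real.sqrt_one.symm]
      exact Real.sqrt_le_sqrt hh1
    have hhs : h ≤ Real.sqrt h := by
      calc h = Real.sqrt h * Real.sqrt h := (Real.mul_self_sqrt hh0).symm
        _ ≤ Real.sqrt h * 1 := mul_le_mul_of_nonneg_left hs1 (Real.sqrt_nonneg h)
        _ = Real.sqrt h := mul_one _
    have : |p + 1 - (q + 1)| = |p - q| := by ring_nf
    rw [this]
    linarith [Real.sqrt_nonneg h]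

lemma rho_single (t : ℝ) (z : Z n m) (i : Fin n) (s : ℝ) :
    rho ((t, z) : E n m) ((t, (z.1 + Pi.single i s, z.2)) : E n m)
      = |Fwf (z.1 i) - Fwf (z.1 i + s)| := by
  unfold rho rho0
  simp only [sub_self, abs_zero, Real.sqrt_zero, add_zero, Real.iSup_const_zero]
  refine le_antisymm ?_ ?_
  · refine Real.iSup_le (fun k => ?_) (abs_nonneg _)
    by_cases hk : k = i
    · subst hk
      simp
    · simp [Pi.single_eq_of_ne hk]
  · have := le_ciSup (f := fun k : Fin n => |Fwf (z.1 k) - Fwf ((z.1 + Pi.single i s : Fin n → ℝ) k)|)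
      (Set.Finite.bddAbove (Set.finite_range _)) i
    simpa using this

end AuxStatement5

/-- Interpolation inequality (2.5): sup norm of `u_{x_i}`. -/
theorem statement5 (n m : ℕ) (hnm : 1 ≤ n + m) (T : ℝ) (hT : 0 < T)
    (a : ℝ) (ha : a ∈ Set.Ioo (0:ℝ) 1) :
    ∃ C > (0:ℝ), ∃ m₀ > (0:ℝ), ∀ u : E n m → ℝ,
      MemCk2 0 a (Set.Icc 0 T) (Sbar n m) u → ∀ ε ∈ Set.Ioo (0:ℝ) 1, ∀ i : Fin n,
        supN (Set.Icc 0 T) (Sbar n m) (dl (eX n m i) u) ≤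
          ENNReal.ofReal ε * Ck2N 0 a (Set.Icc 0 T) (Sbar n m) u
            + ENNReal.ofReal (C * ε ^ (-m₀)) * supN (Set.Icc 0 T) (Sbar n m) u := by
  classical
  obtain ⟨ha0, ha1⟩ := ha
  refine ⟨8, by norm_num, 2 / a, by positivity, ?_⟩
  intro u hu ε hε i
  obtain ⟨hε0, hε1⟩ := hε
  set J : Set ℝ := Set.Icc (0:ℝ) T with hJ
  set v : E n m → ℝ := dl (eX n m i) u with hv
  by_cases hK : supN J (Sbar n m) u = ⊤
  · rw [hK, ENNReal.mul_top (ENNReal.ofReal_pos.mpr (by positivity)).ne', add_top]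
    exact le_top
  have hCk : Ck2N 0 a J (Sbar n m) u ≠ ⊤ := hu.1
  set M : ℝ := (supN J (Sbar n m) u).toReal with hM
  have hM0 : 0 ≤ M := ENNReal.toReal_nonneg
  have hMb : ∀ Q ∈ QT J (Sbar n m), |u Q| ≤ M := by
    intro Q hQ
    have h' : ENNReal.ofReal |u Q| ≤ supN J (Sbar n m) u := le_iSup₂_of_le Q hQ le_rfl
    have h'' := ENNReal.toReal_mono hK h'
    rwa [ENNReal.toReal_ofReal (abs_nonneg _)] at h''
  set h : ℝ := ε ^ (2/a) / 4 with hhdef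
  have hεa : (0:ℝ) < ε ^ (2/a) := Real.rpow_pos_of_pos hε0 _
  have hh0 : 0 < h := by positivity
  have hεa1 : ε ^ (2/a) ≤ 1 := Real.rpow_le_one hε0.le hε1.le (by positivity)
  have hh2 : h ≤ 1/2 := by rw [hhdef]; linarith
  have hsqrt4 : Real.sqrt 4 = 2 := by
    rw [show (4:ℝ) = 2^2 by norm_num, Real.sqrt_sq (by norm_num : (0:ℝ) ≤ 2)]
  have hkey : (2 * Real.sqrt h) ^ a = ε := by
    have h4 : Real.sqrt h = ε ^ (1/a) / 2 := by
      rw [hhdef, Real.sqrt_div hεa.le 4, hsqrt4, Real.sqrt_eq_rpow,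
        ← Real.rpow_mul hε0.le, show 2/a * (1/2) = 1/a by ring]
    rw [h4, show 2 * (ε ^ (1/a) / 2) = ε ^ (1/a) by ring, ← Real.rpow_mul hε0.le,
      one_div_mul_cancel (ne_of_gt ha0), Real.rpow_one]
  simp only [supN]
  refine iSup₂_le ?_
  rintro ⟨t, z⟩ hP
  have htJ : t ∈ J := hP.1
  have hzS : z ∈ Sbar n m := hP.2
  set I : Finset (Fin n) := Finset.univ.filter (fun k => z.1 k ≤ 1) with hI
  set DD : Set (Z n m) := Sbar n m ∩ closure (MI n m I) with hDD
  have hSC : holderSemi a J DD v ≤ Ck2N 0 a J (Sbar n m) u := by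
    have e2 : holderN a J DD v ≤ CkN 1 a J DD u := by
      have hle := ENNReal.le_tsum (f := fun p : Idx n m 1 => holderN a J DD (multiDP p.1 u))
        ⟨(0, Pi.single i 1, 0), by simp [MIdx.wt, Finset.sum_pi_single']⟩
      simpa [CkN, multiDP, multiD_single_eq, hv] using hle
    have e3 : CkN 1 a J DD u ≤ pieceN I a J DD u := by
      unfold pieceN
      exact le_self_add.trans (le_self_add.trans (le_self_add.trans (le_self_add.trans
        (le_self_add.trans (le_self_add.trans le_self_add)))))
    have e4 : pieceN I a J DD u ≤ C2N a J (Sbar n m) u := by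
      unfold C2N
      rw [hDD]
      exact Finset.single_le_sum (f := fun I' : Finset (Fin n) =>
        pieceN I' a J (Sbar n m ∩ closure (MI n m I')) u) (fun _ _ => zero_le)
        (Finset.mem_univ I)
    have e5 : C2N a J (Sbar n m) u ≤ Ck2N 0 a J (Sbar n m) u := by
      have hle := ENNReal.le_tsum (f := fun p : Idx n m 0 => C2N a J (Sbar n m) (multiDP p.1 u))
        ⟨(0, 0, 0), by simp [MIdx.wt]⟩
      simpa [Ck2N, multiDP, multiD_zero_eq] using hle
    exact (le_add_self.trans e2).trans (e3.trans (e4.trans e5))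
  have hSne : holderSemi a J DD v ≠ ⊤ := ne_top_of_le_ne_top hCk hSC
  set Sr : ℝ := (holderSemi a J DD v).toReal with hSr
  have hSr0 : 0 ≤ Sr := ENNReal.toReal_nonneg
  have hx0 : 0 ≤ z.1 i := hzS i
  obtain ⟨c, hc0, hch, hcase⟩ :
      ∃ c : ℝ, c ≤ 0 ∧ 0 ≤ c + h ∧
        ((z.1 i ≤ 1 ∧ ∀ s ∈ Set.Icc c (c + h), z.1 i + s ∈ Set.Icc (0:ℝ) 1)
          ∨ (1 < z.1 i ∧ ∀ s ∈ Set.Icc c (c + h), 1 ≤ z.1 i + s)) := by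
    rcases le_or_gt (z.1 i) (1/2) with h1 | h1
    · exact ⟨0, le_rfl, by linarith, Or.inl ⟨by linarith,
        fun s hs => ⟨by linarith [hs.1], by linarith [hs.2]⟩⟩⟩
    rcases le_or_gt (z.1 i) 1 with h2 | h2
    · exact ⟨-h, by linarith, by linarith, Or.inl ⟨h2,
        fun s hs => ⟨by linarith [hs.1], by linarith [hs.2]⟩⟩⟩
    · exact ⟨0, le_rfl, by linarith, Or.inr ⟨h2, fun s hs => by linarith [hs.1]⟩⟩
  have h0mem : (0:ℝ) ∈ Set.Icc c (c + h) := ⟨hc0, hch⟩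
  have hiI : ∀ s ∈ Set.Icc c (c + h), 0 ≤ z.1 i + s := by
    intro s hs
    rcases hcase with ⟨_, hreg⟩ | ⟨_, hreg⟩
    · exact (hreg s hs).1
    · linarith [hreg s hs]
  have hmemS : ∀ s ∈ Set.Icc c (c + h), (((z.1 + Pi.single i s : Fin n → ℝ), z.2) : Z n m) ∈ Sbar n m := by
    intro s hs k
    show 0 ≤ (z.1 + Pi.single i s : Fin n → ℝ) k
    simp only [Pi.add_apply, Pi.single_apply]
    by_cases hk : k = i
    · subst hk
      simpa using hiI s hs
    · simpa [hk] using hzS k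
  have hmemC : ∀ s ∈ Set.Icc c (c + h),
      (((z.1 + Pi.single i s : Fin n → ℝ), z.2) : Z n m) ∈ closure (MI n m I) := by
    intro s hs
    refine mem_closure_MI I _ ?_ ?_
    · intro k hk
      have hk1 : z.1 k ≤ 1 := by
        rw [hI] at hk
        exact (Finset.mem_filter.mp hk).2
      by_cases hki : k = i
      · subst hki
        rcases hcase with ⟨_, hreg⟩ | ⟨hgt, _⟩
        · simpa using hreg s hs
        · exact absurd hk1 (not_le.mpr hgt)
      · show (z.1 + Pi.single i s : Fin n → ℝ) k ∈ Set.Icc (0:ℝ) 1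
        simp only [Pi.add_apply, Pi.single_apply, if_neg hki, add_zero]
        exact ⟨hzS k, hk1⟩
    · intro k hk
      have hk1 : 1 < z.1 k := by
        rw [hI] at hk
        simpa [Finset.mem_filter, not_le] using hk
      by_cases hki : k = i
      · subst hki
        rcases hcase with ⟨hle, _⟩ | ⟨_, hreg⟩
        · exact absurd hle (not_le.mpr hk1)
        · simpa using hreg s hs
      · show 1 ≤ (z.1 + Pi.single i s : Fin n → ℝ) k
        simp only [Pi.add_apply, Pi.single_apply, if_neg hki, add_zero]
        exact hk1.le
  set Q : ℝ → E n m := fun s => ((t, ((z.1 + Pi.single i s : Fin n → ℝ), z.2)) : E n m) with hQdef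
  have hQmem : ∀ s ∈ Set.Icc c (c + h), Q s ∈ QT J DD := by
    intro s hs
    exact ⟨htJ, hmemS s hs, hmemC s hs⟩
  have hQsb : ∀ s ∈ Set.Icc c (c + h), Q s ∈ QT J (Sbar n m) := by
    intro s hs
    exact ⟨htJ, hmemS s hs⟩
  have hQe : ∀ s : ℝ, Q s = ((t, z) : E n m) + s • eX n m i := by
    intro s
    have hadd : ((t, z) : E n m) + s • ((0, (Pi.single i 1, 0)) : E n m)
        = (t + s • (0:ℝ), ((z.1 + s • (Pi.single i 1 : Fin n → ℝ)), z.2 + s • (0 : Fin m → ℝ))) := rfl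
    have h21 : z.1 + Pi.single i s = (z.1 + s • (Pi.single i 1 : Fin n → ℝ)) := by
      funext k
      by_cases hk : k = i
      · subst hk
        simp
      · simp [Pi.single_apply, hk]
    rw [hQdef]
    simp only [eX, hadd, smul_zero, add_zero, h21]
  have hQ0 : Q 0 = ((t, z) : E n m) := by
    rw [hQdef]
    simp
  have hderiv_eq : ∀ s : ℝ, v (Q s) = deriv (fun τ : ℝ => u (Q τ)) s := by
    intro s
    rw [hv]
    show deriv (fun τ : ℝ => u (Q s + τ • eX n m i)) (0:ℝ) = _
    have hfun : (fun τ : ℝ => u (Q s + τ • eX n m i)) = fun τ : ℝ => u (Q (s + τ)) := by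
      funext τ
      rw [hQe s, hQe (s + τ), add_smul, ← add_assoc]
    rw [hfun]
    have hshift := deriv_comp_const_add (fun τ : ℝ => u (Q τ)) s 0
    simpa using hshift
  have hφb : ∀ s ∈ Set.Icc c (c + h), |u (Q s)| ≤ M := fun s hs => hMb (Q s) (hQsb s hs)
  have hhol : ∀ s ∈ Set.Icc c (c + h), s ≠ 0 → |v (Q 0) - v (Q s)| ≤ Sr * ε := by
    intro s hs hs0
    have hP1 : Q 0 ∈ QT J DD := hQmem 0 h0mem
    have hP2 : Q s ∈ QT J DD := hQmem s hs
    have hne : Q 0 ≠ Q s := by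
      intro heq
      have h2 := congrArg (fun P : E n m => P.2.1 i) heq
      simp only [hQdef, Pi.add_apply, Pi.single_eq_same] at h2
      exact hs0 (by linarith)
    have hrho : rho (Q 0) (Q s) = |Fwf (z.1 i) - Fwf (z.1 i + s)| := by
      rw [hQ0]
      exact rho_single t z i s
    have hrpos : 0 < rho (Q 0) (Q s) := by
      rw [hrho]
      have hne' : Fwf (z.1 i) ≠ Fwf (z.1 i + s) := by
        rcases lt_or_gt_of_ne hs0 with hlt | hgt
        · exact (fwf_lt (hiI s hs) (by linarith)).ne'
        · exact (fwf_lt hx0 (by linarith)).ne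
      exact abs_pos.mpr (sub_ne_zero.mpr hne')
    have hsem : ENNReal.ofReal (|v (Q 0) - v (Q s)| / rho (Q 0) (Q s) ^ a)
        ≤ holderSemi a J DD v :=
      le_iSup₂_of_le (Q 0) hP1 (le_iSup₂_of_le (Q s) hP2 (le_iSup_of_le hne le_rfl))
    have hq : |v (Q 0) - v (Q s)| / rho (Q 0) (Q s) ^ a ≤ Sr := by
      have hmono := ENNReal.toReal_mono hSne hsem
      rwa [ENNReal.toReal_ofReal (by positivity)] at hmono
    have hrle : rho (Q 0) (Q s) ^ a ≤ ε := by
      rw [hrho, ← hkey]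
      refine Real.rpow_le_rpow (abs_nonneg _) ?_ ha0.le
      refine fwf_diff_le_sqrt hh0.le (by linarith) ?_ ?_
      · rw [show z.1 i - (z.1 i + s) = -s by ring, abs_neg, abs_le]
        exact ⟨by linarith [hs.1], by linarith [hs.2]⟩
      · rcases hcase with ⟨_, hreg⟩ | ⟨hgt, hreg⟩
        · exact Or.inl ⟨by simpa using hreg 0 h0mem, hreg s hs⟩
        · exact Or.inr ⟨hgt.le, hreg s hs⟩
    have hpow : 0 < rho (Q 0) (Q s) ^ a := Real.rpow_pos_of_pos hrpos a
    calc |v (Q 0) - v (Q s)| ≤ Sr * rho (Q 0) (Q s) ^ a := (div_le_iff₀ hpow).mp hq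
      _ ≤ Sr * ε := mul_le_mul_of_nonneg_left hrle hSr0
  have hmain : |v ((t, z) : E n m)| ≤ Sr * ε + 2 * M / (c + h - c) := by
    have hsc := scalar_interp (fun τ => u (Q τ)) (fun τ => v (Q τ)) hc0 hch
      (by linarith) (mul_nonneg hSr0 hε0.le) (fun s _ => hderiv_eq s) hφb
      (fun s hs hs0 => hhol s hs hs0)
    simpa [hQ0] using hsc
  rw [show c + h - c = h by ring] at hmain
  have h2M : 2 * M / h = 8 * ε ^ (-(2/a)) * M := by
    rw [hhdef, Real.rpow_neg hε0.le]
    field_simp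
    ring
  have hfinal : |v ((t, z) : E n m)| ≤ ε * Sr + 8 * ε ^ (-(2/a)) * M := by
    rw [h2M] at hmain
    linarith [hmain]
  calc ENNReal.ofReal |v ((t, z) : E n m)|
      ≤ ENNReal.ofReal (ε * Sr + 8 * ε ^ (-(2/a)) * M) := ENNReal.ofReal_le_ofReal hfinal
    _ = ENNReal.ofReal (ε * Sr) + ENNReal.ofReal (8 * ε ^ (-(2/a)) * M) :=
        ENNReal.ofReal_add (by positivity) (mul_nonneg (by positivity) hM0)
    _ = ENNReal.ofReal ε * ENNReal.ofReal Sr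
        + ENNReal.ofReal (8 * ε ^ (-(2/a))) * ENNReal.ofReal M := by
        rw [ENNReal.ofReal_mul hε0.le, ENNReal.ofReal_mul (by positivity)]
    _ ≤ ENNReal.ofReal ε * Ck2N 0 a J (Sbar n m) u
        + ENNReal.ofReal (8 * ε ^ (-(2/a))) * supN J (Sbar n m) u := by
        refine add_le_add (mul_le_mul_right ?_ _) (mul_le_mul_right ?_ _)
        · rw [hSr, ENNReal.ofReal_toReal hSne]
          exact hSC
        · rw [hM, ENNReal.ofReal_toReal hK]


end Kimura
end
end

section
/- Let T > 0 and α ∈ (0,1). There exist constants C = C(α,m,n,T) > 0 and m₀ = m₀(α,m,n) > 0 such that for every function u ∈ C^{0,2+α}_{WF}([0,T]×S̄_{n,m}) and every ε ∈ (0,1): ‖u_t‖_{C([0,T]×S̄_{n,m})} ≤ ε ‖u‖_{C^{0,2+α}_{WF}([0,T]×S̄_{n,m})} + C ε^{−m₀} ‖u‖_{C([0,T]×S̄_{n,m})}. -/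
open scoped ENNReal BigOperators
open Set

noncomputable section

namespace Kimura

variable {n m : ℕ}

/-! ### Auxiliary lemmas for `statement7` -/

lemma foldr_comp_id' {α β : Type*} (l : List ((α → β) → (α → β))) (h : ∀ f ∈ l, f = id) :
    l.foldr (· ∘ ·) id = id := by
  induction l with
  | nil => rfl
  | cons f t ih =>
    simp only [List.foldr_cons, h f (by simp), ih fun g hg => h g (by simp [hg])]
    rfl

lemma multiDP_zero (u : E n m → ℝ) : multiDP ((0, 0, 0) : MIdx n m) u = u := by
  show multiD 0 0 0 u = u
  rw [multiD, Function.iterate_zero, foldr_comp_id', foldr_comp_id']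
  · rfl
  · intro f hf
    simp only [List.mem_ofFn] at hf
    obtain ⟨i, rfl⟩ := hf
    simp
  · intro f hf
    simp only [List.mem_ofFn] at hf
    obtain ⟨i, rfl⟩ := hf
    simp

lemma multiDP_zero' (u : E n m → ℝ) : multiDP (0 : MIdx n m) u = u := multiDP_zero u

lemma rho0_self (z : Z n m) : rho0 z z = 0 := by
  simp [rho0, Real.iSup_const_zero]

lemma dl_eT_eq (u : E n m → ℝ) (s : ℝ) (z : Z n m) :
    dl (eT n m) u (s, z) = deriv (fun σ => u (σ, z)) s := by
  have h : (fun τ : ℝ => u ((s, z) + τ • eT n m)) = fun τ => u (s + τ, z) := by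
    funext τ
    congr 1
    simp [eT, Prod.ext_iff]
  rw [dl, lineDeriv, h]
  simpa using deriv_comp_const_add (fun σ => u (σ, z)) s 0

lemma mem_closure_MI_s7 (z : Z n m) (hz : z ∈ Sbar n m) :
    z ∈ closure (MI n m (Finset.univ.filter fun i => z.1 i ≤ 1)) := by
  set I := Finset.univ.filter fun i : Fin n => z.1 i ≤ 1 with hI
  set w : ℕ → Z n m := fun k =>
    (fun i => z.1 i + (1 / ((k : ℝ) + 1)) * (if z.1 i ≤ 1 then 1/2 - z.1 i else 1), z.2)
  have htend : Filter.Tendsto w Filter.atTop (nhds z) := by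
    apply Filter.Tendsto.prodMk_nhds _ tendsto_const_nhds
    rw [tendsto_pi_nhds]
    intro i
    have h0 : Filter.Tendsto (fun k : ℕ => (1 / ((k : ℝ) + 1))) Filter.atTop (nhds 0) :=
      tendsto_one_div_add_atTop_nhds_zero_nat
    have := (h0.mul_const (if z.1 i ≤ 1 then 1/2 - z.1 i else 1)).const_add (z.1 i)
    simpa using this
  refine mem_closure_of_tendsto htend (Filter.Eventually.of_forall fun k => ?_)
  have hθ0 : 0 < 1 / ((k : ℝ) + 1) := by positivity
  have hθ1 : 1 / ((k : ℝ) + 1) ≤ 1 := by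
    rw [div_le_one (by positivity)]; linarith [Nat.cast_nonneg (α := ℝ) k]
  constructor
  · intro i hi
    have hle : z.1 i ≤ 1 := by simpa [hI] using hi
    have h0 : 0 ≤ z.1 i := hz i
    simp only [w, hle, if_pos]
    constructor
    · nlinarith
    · nlinarith
  · intro j hj
    have hgt : ¬ z.1 j ≤ 1 := by simpa [hI] using hj
    simp only [w, hgt, if_neg, not_false_iff]
    push_neg at hgt
    nlinarith

lemma holderSemi_dlT_le (a : ℝ) (J : Set ℝ) (u : E n m → ℝ) (I : Finset (Fin n)) :
    holderSemi a J (Sbar n m ∩ closure (MI n m I)) (dl (eT n m) u)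
      ≤ Ck2N 0 a J (Sbar n m) u := by
  set D := Sbar n m ∩ closure (MI n m I) with hD
  have h1 : holderSemi a J D (dl (eT n m) u) ≤ pieceN I a J D u := by
    rw [pieceN, holderN]
    exact le_add_right (le_add_right (le_add_right (le_add_right (le_add_right
      (le_add_right (le_add_left le_add_self))))))
  have h2 : pieceN I a J D u ≤ C2N a J (Sbar n m) u := by
    rw [C2N]
    exact Finset.single_le_sum
      (f := fun I' => pieceN I' a J (Sbar n m ∩ closure (MI n m I')) u)
      (fun _ _ => zero_le) (Finset.mem_univ I)
  have h3 : C2N a J (Sbar n m) u ≤ Ck2N 0 a J (Sbar n m) u := by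
    rw [Ck2N]
    have := ENNReal.le_tsum
      (f := fun p : Idx n m 0 => C2N a J (Sbar n m) (multiDP p.1 u))
      ⟨((0, 0, 0) : MIdx n m), by norm_num [MIdx.wt]⟩
    simpa [multiDP_zero', multiDP_zero] using this
  exact h1.trans (h2.trans h3)

/-- Interpolation inequality (2.7): sup norm of `u_t`. -/
theorem statement7 (n m : ℕ) (hnm : 1 ≤ n + m) (T : ℝ) (hT : 0 < T)
    (a : ℝ) (ha : a ∈ Set.Ioo (0:ℝ) 1) :
    ∃ C > (0:ℝ), ∃ m₀ > (0:ℝ), ∀ u : E n m → ℝ,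
      MemCk2 0 a (Set.Icc 0 T) (Sbar n m) u → ∀ ε ∈ Set.Ioo (0:ℝ) 1,
        supN (Set.Icc 0 T) (Sbar n m) (dl (eT n m) u) ≤
          ENNReal.ofReal ε * Ck2N 0 a (Set.Icc 0 T) (Sbar n m) u
            + ENNReal.ofReal (C * ε ^ (-m₀)) * supN (Set.Icc 0 T) (Sbar n m) u := by
  obtain ⟨ha0, ha1⟩ := ha
  refine ⟨2 + 4 / T, by positivity, 2 / a, by positivity, ?_⟩
  intro u hu ε hε
  obtain ⟨hε0, hε1⟩ := hε
  set J : Set ℝ := Set.Icc 0 T with hJ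
  by_cases hMtop : supN J (Sbar n m) u = ⊤
  · have hpos : (0:ℝ) < (2 + 4 / T) * ε ^ (-(2 / a)) := by positivity
    rw [hMtop, ENNReal.mul_top (ENNReal.ofReal_pos.mpr hpos).ne', add_top]
    exact le_top
  have hN : Ck2N 0 a J (Sbar n m) u ≠ ⊤ := hu.1
  set S := (Ck2N 0 a J (Sbar n m) u).toReal with hSdef
  set M := (supN J (Sbar n m) u).toReal with hMdef
  have hM0 : 0 ≤ M := ENNReal.toReal_nonneg
  have hS0 : 0 ≤ S := ENNReal.toReal_nonneg
  have hMbd' : ∀ s ∈ J, ∀ z ∈ Sbar n m, |u (s, z)| ≤ M := by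
    intro s hs z hz
    have h1 : ENNReal.ofReal |u (s, z)| ≤ supN J (Sbar n m) u :=
      le_iSup₂_of_le ((s, z) : E n m) (⟨hs, hz⟩ : ((s,z) : E n m) ∈ QT J (Sbar n m)) le_rfl
    have := ENNReal.toReal_mono hMtop h1
    rwa [ENNReal.toReal_ofReal (abs_nonneg _)] at this
  set h := min (ε ^ (2 / a)) (T / 2) with hhdef
  have hh0 : 0 < h := lt_min (Real.rpow_pos_of_pos hε0 _) (by linarith)
  have hhT : h ≤ T / 2 := min_le_right _ _
  have hhε : h ≤ ε ^ (2 / a) := min_le_left _ _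
  refine iSup₂_le ?_
  rintro ⟨t, z⟩ ⟨htJ, hz⟩
  by_cases hv0 : dl (eT n m) u (t, z) = 0
  · rw [hv0]; simp
  obtain ⟨ht0, htT⟩ := htJ
  obtain ⟨c, hc0, hcT, hct⟩ :
      ∃ c : ℝ, 0 ≤ c ∧ c + h ≤ T ∧ (t = c ∨ t = c + h) := by
    rcases le_or_gt t (T / 2) with hle | hlt
    · exact ⟨t, ht0, by linarith, Or.inl rfl⟩
    · exact ⟨t - h, by linarith, by linarith, Or.inr (by ring)⟩
  have hIccJ : Set.Icc c (c + h) ⊆ J := fun x hx => ⟨by linarith [hx.1], by linarith [hx.2]⟩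
  obtain ⟨s, hsmem, hsne, hsbd⟩ :
      ∃ s ∈ Set.Icc c (c + h), s ≠ t ∧
        |dl (eT n m) u (t, z)| ≤
          |dl (eT n m) u (t, z) - dl (eT n m) u (s, z)| + 2 * M / h := by
    by_cases hex : ∃ s ∈ Set.Icc c (c + h), dl (eT n m) u (s, z) = 0
    · obtain ⟨s, hs, hvs⟩ := hex
      refine ⟨s, hs, fun he => hv0 (he ▸ hvs), ?_⟩
      have hpos : (0:ℝ) ≤ 2 * M / h := by positivity
      rw [hvs, sub_zero]
      linarith
    · push_neg at hex
      have hderiv : ∀ x ∈ Set.Icc c (c + h),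
          HasDerivAt (fun σ => u (σ, z)) (dl (eT n m) u (x, z)) x := by
        intro x hx
        have hne := hex x hx
        have hd : DifferentiableAt ℝ (fun σ => u (σ, z)) x := by
          by_contra hnd
          exact hne (by rw [dl_eT_eq, deriv_zero_of_not_differentiableAt hnd])
        have hda := hd.hasDerivAt
        rwa [dl_eT_eq]
      have hcont : ContinuousOn (fun σ => u (σ, z)) (Set.Icc c (c + h)) := by
        have hu0 : ContinuousOn u (QT J (Sbar n m)) := by
          have hcc := hu.2.1 ⟨((0, 0, 0) : MIdx n m), by norm_num [MIdx.wt]⟩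
          simpa [multiDP_zero', multiDP_zero] using hcc
        refine hu0.comp
          (((continuous_id.prodMk continuous_const :
              Continuous fun σ : ℝ => ((σ, z) : E n m))).continuousOn) ?_
        intro x hx
        exact ⟨hIccJ hx, hz⟩
      obtain ⟨ξ, hξ, hslope⟩ :=
        exists_hasDerivAt_eq_slope (fun σ => u (σ, z)) (fun x => dl (eT n m) u (x, z))
          (by linarith : c < c + h) hcont
          (fun x hx => hderiv x (Set.Ioo_subset_Icc_self hx))
      refine ⟨ξ, Set.Ioo_subset_Icc_self hξ, ?_, ?_⟩
      · rcases hct with rfl | rfl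
        · exact ne_of_gt hξ.1
        · exact ne_of_lt hξ.2
      · have hb : |dl (eT n m) u (ξ, z)| ≤ 2 * M / h := by
          have h1 : |u (c + h, z)| ≤ M := hMbd' _ (hIccJ ⟨by linarith, le_refl _⟩) z hz
          have h2 : |u (c, z)| ≤ M := hMbd' _ (hIccJ ⟨le_refl _, by linarith⟩) z hz
          have hnum : |u (c + h, z) - u (c, z)| ≤ 2 * M := by
            calc |u (c + h, z) - u (c, z)| ≤ |u (c + h, z)| + |u (c, z)| := abs_sub _ _
              _ ≤ M + M := add_le_add h1 h2
              _ = 2 * M := by ring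
          rw [hslope, show c + h - c = h by ring, abs_div, abs_of_pos hh0]
          gcongr
        calc |dl (eT n m) u (t, z)|
            = |(dl (eT n m) u (t, z) - dl (eT n m) u (ξ, z)) + dl (eT n m) u (ξ, z)| := by
              ring_nf
          _ ≤ |dl (eT n m) u (t, z) - dl (eT n m) u (ξ, z)| + |dl (eT n m) u (ξ, z)| :=
              abs_add_le _ _
          _ ≤ _ := by linarith
  set I := Finset.univ.filter fun i : Fin n => z.1 i ≤ 1 with hIdef
  have hzc : z ∈ closure (MI n m I) := mem_closure_MI_s7 z hz
  have hsJ : s ∈ J := hIccJ hsmem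
  have hts : |t - s| ≤ h := by
    rw [abs_le]
    rcases hct with rfl | rfl
    · constructor
      · linarith [hsmem.2]
      · linarith [hsmem.1]
    · constructor
      · linarith [hsmem.2]
      · linarith [hsmem.1]
  have hρ : rho ((t, z) : E n m) (s, z) = Real.sqrt |t - s| := by
    rw [rho]
    simp [rho0_self]
  have hρ0 : 0 < rho ((t, z) : E n m) (s, z) := by
    rw [hρ]
    exact Real.sqrt_pos.mpr (abs_pos.mpr (sub_ne_zero.mpr (Ne.symm hsne)))
  have hρε : rho ((t, z) : E n m) (s, z) ^ a ≤ ε := by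
    have h1 : rho ((t, z) : E n m) (s, z) ≤ Real.sqrt h := by
      rw [hρ]
      exact Real.sqrt_le_sqrt hts
    calc rho ((t, z) : E n m) (s, z) ^ a ≤ (Real.sqrt h) ^ a :=
          Real.rpow_le_rpow hρ0.le h1 ha0.le
      _ = h ^ ((1/2) * a) := by rw [Real.sqrt_eq_rpow, ← Real.rpow_mul hh0.le]
      _ ≤ (ε ^ (2 / a)) ^ ((1/2) * a) := Real.rpow_le_rpow hh0.le hhε (by positivity)
      _ = ε := by
          rw [← Real.rpow_mul hε0.le, show (2 / a) * ((1/2) * a) = 1 by field_simp,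
            Real.rpow_one]
  have hsemi : |dl (eT n m) u (t, z) - dl (eT n m) u (s, z)|
      / rho ((t, z) : E n m) (s, z) ^ a ≤ S := by
    have hP1 : ((t, z) : E n m) ∈ QT J (Sbar n m ∩ closure (MI n m I)) :=
      ⟨⟨ht0, htT⟩, hz, hzc⟩
    have hP2 : ((s, z) : E n m) ∈ QT J (Sbar n m ∩ closure (MI n m I)) := ⟨hsJ, hz, hzc⟩
    have hne : ((t, z) : E n m) ≠ (s, z) := fun hEq => hsne (congrArg Prod.fst hEq).symm
    have hle : ENNReal.ofReal (|dl (eT n m) u (t, z) - dl (eT n m) u (s, z)|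
          / rho ((t, z) : E n m) (s, z) ^ a)
        ≤ holderSemi a J (Sbar n m ∩ closure (MI n m I)) (dl (eT n m) u) :=
      le_iSup₂_of_le ((t, z) : E n m) hP1 (le_iSup₂_of_le ((s, z) : E n m) hP2
        (le_iSup_of_le hne le_rfl))
    have h2 := hle.trans (holderSemi_dlT_le a J u I)
    have h3 := ENNReal.toReal_mono hN h2
    rwa [ENNReal.toReal_ofReal (by positivity)] at h3
  have habs : |dl (eT n m) u (t, z) - dl (eT n m) u (s, z)| ≤ ε * S := by
    rw [div_le_iff₀ (by positivity : 0 < rho ((t, z) : E n m) (s, z) ^ a)] at hsemi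
    calc |dl (eT n m) u (t, z) - dl (eT n m) u (s, z)|
        ≤ S * rho ((t, z) : E n m) (s, z) ^ a := hsemi
      _ ≤ S * ε := mul_le_mul_of_nonneg_left hρε hS0
      _ = ε * S := mul_comm _ _
  have hεneg : (1:ℝ) ≤ ε ^ (-(2 / a)) :=
    Real.one_le_rpow_of_pos_of_le_one_of_nonpos hε0 hε1.le (neg_nonpos.mpr (by positivity))
  have h2h : 2 * M / h ≤ ((2 + 4 / T) * ε ^ (-(2 / a))) * M := by
    have hA : (0:ℝ) < ε ^ (2 / a) := Real.rpow_pos_of_pos hε0 _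
    have key : 2 / h ≤ 2 / ε ^ (2 / a) + 2 / (T / 2) := by
      rcases min_choice (ε ^ (2 / a)) (T / 2) with hmin | hmin
      · rw [hhdef, hmin]
        have : (0:ℝ) ≤ 2 / (T / 2) := by positivity
        linarith
      · rw [hhdef, hmin]
        have : (0:ℝ) ≤ 2 / ε ^ (2 / a) := by positivity
        linarith
    have e1 : 2 / ε ^ (2 / a) = 2 * ε ^ (-(2 / a)) := by
      rw [Real.rpow_neg hε0.le]
      field_simp
    have e2 : 2 / (T / 2) = 4 / T := by
      field_simp
      ring
    have h2d : 2 / h ≤ (2 + 4 / T) * ε ^ (-(2 / a)) := by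
      have h4T : (0:ℝ) < 4 / T := by positivity
      calc 2 / h ≤ 2 * ε ^ (-(2 / a)) + 4 / T := by rw [← e1, ← e2]; exact key
        _ ≤ 2 * ε ^ (-(2 / a)) + (4 / T) * ε ^ (-(2 / a)) := by nlinarith
        _ = (2 + 4 / T) * ε ^ (-(2 / a)) := by ring
    calc 2 * M / h = (2 / h) * M := by ring
      _ ≤ _ := mul_le_mul_of_nonneg_right h2d hM0
  have hfinal : |dl (eT n m) u (t, z)| ≤ ε * S + ((2 + 4 / T) * ε ^ (-(2 / a))) * M := by
    calc |dl (eT n m) u (t, z)|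
        ≤ |dl (eT n m) u (t, z) - dl (eT n m) u (s, z)| + 2 * M / h := hsbd
      _ ≤ ε * S + ((2 + 4 / T) * ε ^ (-(2 / a))) * M := add_le_add habs h2h
  calc ENNReal.ofReal |dl (eT n m) u (t, z)|
      ≤ ENNReal.ofReal (ε * S + ((2 + 4 / T) * ε ^ (-(2 / a))) * M) :=
        ENNReal.ofReal_le_ofReal hfinal
    _ ≤ ENNReal.ofReal (ε * S) + ENNReal.ofReal (((2 + 4 / T) * ε ^ (-(2 / a))) * M) :=
        ENNReal.ofReal_add_le
    _ = ENNReal.ofReal ε * Ck2N 0 a J (Sbar n m) u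
        + ENNReal.ofReal ((2 + 4 / T) * ε ^ (-(2 / a))) * supN J (Sbar n m) u := by
        rw [ENNReal.ofReal_mul hε0.le, ENNReal.ofReal_mul (by positivity), hSdef, hMdef,
          ENNReal.ofReal_toReal hN, ENNReal.ofReal_toReal hMtop]


end Kimura
end
end
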